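/- arXiv:2406.03998 — 6 statements merged into one kernel-verified Lean document; each statement's English description precedes it below -/
import Mathlib

section
/- If a is a 4×4 matrix with det a = 1 (i.e., a ∈ SL(4,K)), then its second compound matrix m₂(a) has determinant 1, i.e., m₂(a) ∈ SL(6,K). -/
open Matrix

def pr : Fin 6 → Fin 4 × Fin 4
  | 0 => (0, 1)
  | 1 => (0, 2)
  | 2 => (0, 3)
  | 3 => (1, 2)
  | 4 => (1, 3)
  | 5 => (2, 3)

/-- The 2×2 minor of `a` on rows `r.1 < r.2` and columns `c.1 < c.2`. -/
def minor2 {K : Type*} [CommRing K] (a : Matrix (Fin 4) (Fin 4) K)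
    (r c : Fin 4 × Fin 4) : K :=
  (a.submatrix ![r.1, r.2] ![c.1, c.2]).det

/-- The second compound matrix of a 4×4 matrix: the 6×6 matrix of 2×2 minors,
rows and columns indexed by the 2-element index pairs in lexicographic order. -/
def m2 {K : Type*} [CommRing K] (a : Matrix (Fin 4) (Fin 4) K) :
    Matrix (Fin 6) (Fin 6) K :=
  fun i j => minor2 a (pr i) (pr j)

@[simp] lemma pr_zero : pr 0 = (0,1) := rfl
@[simp] lemma pr_one : pr 1 = (0,2) := rfl
@[simp] lemma pr_two : pr 2 = (0,3) := rfl
@[simp] lemma pr_three : pr 3 = (1,2) := rfl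
@[simp] lemma pr_four : pr 4 = (1,3) := rfl
@[simp] lemma pr_five : pr 5 = (2,3) := rfl

@[simp] lemma minor2_eq {K : Type*} [CommRing K] (a : Matrix (Fin 4) (Fin 4) K)
    (i j k l : Fin 4) : minor2 a (i,j) (k,l) = a i k * a j l - a i l * a j k := by
  rw [minor2, Matrix.det_fin_two]
  simp

set_option maxRecDepth 8000
set_option maxHeartbeats 2000000

lemma m2_mul {K : Type*} [CommRing K] (a b : Matrix (Fin 4) (Fin 4) K) :
    m2 (a * b) = m2 a * m2 b := by
  ext i j
  fin_cases i <;> fin_cases j <;>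
    (simp [m2, Matrix.mul_apply, Fin.sum_univ_four, Fin.sum_univ_six]; ring)

lemma m2_diagonal {K : Type*} [CommRing K] (d : Fin 4 → K) :
    m2 (diagonal d) = diagonal (fun i => d (pr i).1 * d (pr i).2) := by
  ext i j
  fin_cases i <;> fin_cases j <;>
    simp [m2, Matrix.diagonal, Matrix.one_apply]

lemma m2t01 {K : Type*} [CommRing K] (c : K) :
    m2 (transvection (0 : Fin 4) 1 c) = !![1, 0, 0, 0, 0, 0; 0, 1, 0, c, 0, 0; 0, 0, 1, 0, c, 0; 0, 0, 0, 1, 0, 0; 0, 0, 0, 0, 1, 0; 0, 0, 0, 0, 0, 1] := by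
  ext i j
  fin_cases i <;> fin_cases j <;>
    (simp [m2, Matrix.transvection, Matrix.single, Matrix.one_apply] <;> rfl)

lemma m2t01det {K : Type*} [CommRing K] (c : K) :
    (m2 (transvection (0 : Fin 4) 1 c)).det = 1 := by
  rw [m2t01]
  simp [Matrix.det_succ_row_zero, Fin.sum_univ_succ]
  try ring

lemma m2t02 {K : Type*} [CommRing K] (c : K) :
    m2 (transvection (0 : Fin 4) 2 c) = !![1, 0, 0, -c, 0, 0; 0, 1, 0, 0, 0, 0; 0, 0, 1, 0, 0, c; 0, 0, 0, 1, 0, 0; 0, 0, 0, 0, 1, 0; 0, 0, 0, 0, 0, 1] := by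
  ext i j
  fin_cases i <;> fin_cases j <;>
    (simp [m2, Matrix.transvection, Matrix.single, Matrix.one_apply] <;> rfl)

lemma m2t02det {K : Type*} [CommRing K] (c : K) :
    (m2 (transvection (0 : Fin 4) 2 c)).det = 1 := by
  rw [m2t02]
  simp [Matrix.det_succ_row_zero, Fin.sum_univ_succ]
  try ring

lemma m2t03 {K : Type*} [CommRing K] (c : K) :
    m2 (transvection (0 : Fin 4) 3 c) = !![1, 0, 0, 0, -c, 0; 0, 1, 0, 0, 0, -c; 0, 0, 1, 0, 0, 0; 0, 0, 0, 1, 0, 0; 0, 0, 0, 0, 1, 0; 0, 0, 0, 0, 0, 1] := by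
  ext i j
  fin_cases i <;> fin_cases j <;>
    (simp [m2, Matrix.transvection, Matrix.single, Matrix.one_apply] <;> rfl)

lemma m2t03det {K : Type*} [CommRing K] (c : K) :
    (m2 (transvection (0 : Fin 4) 3 c)).det = 1 := by
  rw [m2t03]
  simp [Matrix.det_succ_row_zero, Fin.sum_univ_succ]
  try ring

lemma m2t10 {K : Type*} [CommRing K] (c : K) :
    m2 (transvection (1 : Fin 4) 0 c) = !![1, 0, 0, 0, 0, 0; 0, 1, 0, 0, 0, 0; 0, 0, 1, 0, 0, 0; 0, c, 0, 1, 0, 0; 0, 0, c, 0, 1, 0; 0, 0, 0, 0, 0, 1] := by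
  ext i j
  fin_cases i <;> fin_cases j <;>
    (simp [m2, Matrix.transvection, Matrix.single, Matrix.one_apply] <;> rfl)

lemma m2t10det {K : Type*} [CommRing K] (c : K) :
    (m2 (transvection (1 : Fin 4) 0 c)).det = 1 := by
  rw [m2t10]
  simp [Matrix.det_succ_row_zero, Fin.sum_univ_succ]
  try ring

lemma m2t12 {K : Type*} [CommRing K] (c : K) :
    m2 (transvection (1 : Fin 4) 2 c) = !![1, c, 0, 0, 0, 0; 0, 1, 0, 0, 0, 0; 0, 0, 1, 0, 0, 0; 0, 0, 0, 1, 0, 0; 0, 0, 0, 0, 1, c; 0, 0, 0, 0, 0, 1] := by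
  ext i j
  fin_cases i <;> fin_cases j <;>
    (simp [m2, Matrix.transvection, Matrix.single, Matrix.one_apply] <;> rfl)

lemma m2t12det {K : Type*} [CommRing K] (c : K) :
    (m2 (transvection (1 : Fin 4) 2 c)).det = 1 := by
  rw [m2t12]
  simp [Matrix.det_succ_row_zero, Fin.sum_univ_succ]
  try ring

lemma m2t13 {K : Type*} [CommRing K] (c : K) :
    m2 (transvection (1 : Fin 4) 3 c) = !![1, 0, c, 0, 0, 0; 0, 1, 0, 0, 0, 0; 0, 0, 1, 0, 0, 0; 0, 0, 0, 1, 0, -c; 0, 0, 0, 0, 1, 0; 0, 0, 0, 0, 0, 1] := by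
  ext i j
  fin_cases i <;> fin_cases j <;>
    (simp [m2, Matrix.transvection, Matrix.single, Matrix.one_apply] <;> rfl)

lemma m2t13det {K : Type*} [CommRing K] (c : K) :
    (m2 (transvection (1 : Fin 4) 3 c)).det = 1 := by
  rw [m2t13]
  simp [Matrix.det_succ_row_zero, Fin.sum_univ_succ]
  try ring

lemma m2t20 {K : Type*} [CommRing K] (c : K) :
    m2 (transvection (2 : Fin 4) 0 c) = !![1, 0, 0, 0, 0, 0; 0, 1, 0, 0, 0, 0; 0, 0, 1, 0, 0, 0; -c, 0, 0, 1, 0, 0; 0, 0, 0, 0, 1, 0; 0, 0, c, 0, 0, 1] := by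
  ext i j
  fin_cases i <;> fin_cases j <;>
    (simp [m2, Matrix.transvection, Matrix.single, Matrix.one_apply] <;> rfl)

lemma m2t20det {K : Type*} [CommRing K] (c : K) :
    (m2 (transvection (2 : Fin 4) 0 c)).det = 1 := by
  rw [m2t20]
  simp [Matrix.det_succ_row_zero, Fin.sum_univ_succ]
  try ring

lemma m2t21 {K : Type*} [CommRing K] (c : K) :
    m2 (transvection (2 : Fin 4) 1 c) = !![1, 0, 0, 0, 0, 0; c, 1, 0, 0, 0, 0; 0, 0, 1, 0, 0, 0; 0, 0, 0, 1, 0, 0; 0, 0, 0, 0, 1, 0; 0, 0, 0, 0, c, 1] := by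
  ext i j
  fin_cases i <;> fin_cases j <;>
    (simp [m2, Matrix.transvection, Matrix.single, Matrix.one_apply] <;> rfl)

lemma m2t21det {K : Type*} [CommRing K] (c : K) :
    (m2 (transvection (2 : Fin 4) 1 c)).det = 1 := by
  rw [m2t21]
  simp [Matrix.det_succ_row_zero, Fin.sum_univ_succ]
  try ring

lemma m2t23 {K : Type*} [CommRing K] (c : K) :
    m2 (transvection (2 : Fin 4) 3 c) = !![1, 0, 0, 0, 0, 0; 0, 1, c, 0, 0, 0; 0, 0, 1, 0, 0, 0; 0, 0, 0, 1, c, 0; 0, 0, 0, 0, 1, 0; 0, 0, 0, 0, 0, 1] := by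
  ext i j
  fin_cases i <;> fin_cases j <;>
    (simp [m2, Matrix.transvection, Matrix.single, Matrix.one_apply] <;> rfl)

lemma m2t23det {K : Type*} [CommRing K] (c : K) :
    (m2 (transvection (2 : Fin 4) 3 c)).det = 1 := by
  rw [m2t23]
  simp [Matrix.det_succ_row_zero, Fin.sum_univ_succ]
  try ring

lemma m2t30 {K : Type*} [CommRing K] (c : K) :
    m2 (transvection (3 : Fin 4) 0 c) = !![1, 0, 0, 0, 0, 0; 0, 1, 0, 0, 0, 0; 0, 0, 1, 0, 0, 0; 0, 0, 0, 1, 0, 0; -c, 0, 0, 0, 1, 0; 0, -c, 0, 0, 0, 1] := by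
  ext i j
  fin_cases i <;> fin_cases j <;>
    (simp [m2, Matrix.transvection, Matrix.single, Matrix.one_apply] <;> rfl)

lemma m2t30det {K : Type*} [CommRing K] (c : K) :
    (m2 (transvection (3 : Fin 4) 0 c)).det = 1 := by
  rw [m2t30]
  simp [Matrix.det_succ_row_zero, Fin.sum_univ_succ]
  try ring

lemma m2t31 {K : Type*} [CommRing K] (c : K) :
    m2 (transvection (3 : Fin 4) 1 c) = !![1, 0, 0, 0, 0, 0; 0, 1, 0, 0, 0, 0; c, 0, 1, 0, 0, 0; 0, 0, 0, 1, 0, 0; 0, 0, 0, 0, 1, 0; 0, 0, 0, -c, 0, 1] := by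
  ext i j
  fin_cases i <;> fin_cases j <;>
    (simp [m2, Matrix.transvection, Matrix.single, Matrix.one_apply] <;> rfl)

lemma m2t31det {K : Type*} [CommRing K] (c : K) :
    (m2 (transvection (3 : Fin 4) 1 c)).det = 1 := by
  rw [m2t31]
  simp [Matrix.det_succ_row_zero, Fin.sum_univ_succ]
  try ring

lemma m2t32 {K : Type*} [CommRing K] (c : K) :
    m2 (transvection (3 : Fin 4) 2 c) = !![1, 0, 0, 0, 0, 0; 0, 1, 0, 0, 0, 0; 0, c, 1, 0, 0, 0; 0, 0, 0, 1, 0, 0; 0, 0, 0, c, 1, 0; 0, 0, 0, 0, 0, 1] := by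
  ext i j
  fin_cases i <;> fin_cases j <;>
    (simp [m2, Matrix.transvection, Matrix.single, Matrix.one_apply] <;> rfl)

lemma m2t32det {K : Type*} [CommRing K] (c : K) :
    (m2 (transvection (3 : Fin 4) 2 c)).det = 1 := by
  rw [m2t32]
  simp [Matrix.det_succ_row_zero, Fin.sum_univ_succ]
  try ring


lemma fmk0 (h : 0 < 4) : (⟨0, h⟩ : Fin 4) = 0 := rfl
lemma fmk1 (h : 1 < 4) : (⟨1, h⟩ : Fin 4) = 1 := rfl
lemma fmk2 (h : 2 < 4) : (⟨2, h⟩ : Fin 4) = 2 := rfl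
lemma fmk3 (h : 3 < 4) : (⟨3, h⟩ : Fin 4) = 3 := rfl

lemma m2_transvection_det {K : Type*} [Field K] (t : TransvectionStruct (Fin 4) K) :
    (m2 t.toMatrix).det = 1 := by
  obtain ⟨i, j, hij, c⟩ := t
  rw [TransvectionStruct.toMatrix_mk]
  fin_cases i <;> fin_cases j <;> simp only [fmk0, fmk1, fmk2, fmk3]
  · exact absurd rfl hij
  · exact m2t01det c
  · exact m2t02det c
  · exact m2t03det c
  · exact m2t10det c
  · exact absurd rfl hij
  · exact m2t12det c
  · exact m2t13det c
  · exact m2t20det c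
  · exact m2t21det c
  · exact absurd rfl hij
  · exact m2t23det c
  · exact m2t30det c
  · exact m2t31det c
  · exact m2t32det c
  · exact absurd rfl hij

lemma m2_prod_transvec_det {K : Type*} [Field K]
    (L : List (TransvectionStruct (Fin 4) K)) :
    (m2 (L.map TransvectionStruct.toMatrix).prod).det = 1 := by
  induction L with
  | nil =>
      have h1 : m2 (1 : Matrix (Fin 4) (Fin 4) K) = 1 := by
        have := m2_diagonal (fun _ : Fin 4 => (1 : K))
        simpa using this
      simp [h1]
  | cons t L ih =>
      rw [List.map_cons, List.prod_cons, m2_mul, det_mul, ih, m2_transvection_det, one_mul]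

/-- If a ∈ SL(4,K) then m₂(a) ∈ SL(6,K). -/
theorem m2_mem_SL {K : Type*} [Field K] (a : Matrix (Fin 4) (Fin 4) K)
    (ha : a.det = 1) : (m2 a).det = 1 := by
  obtain ⟨L, L', D, h⟩ := Matrix.Pivot.exists_list_transvec_mul_diagonal_mul_list_transvec a
  have hD : ∏ i, D i = 1 := by
    have h2 := ha
    rw [h, det_mul, det_mul, TransvectionStruct.det_toMatrix_prod,
      TransvectionStruct.det_toMatrix_prod, det_diagonal, one_mul, mul_one] at h2
    exact h2
  have hdet3 : (m2 (diagonal D)).det = (∏ i, D i) ^ 3 := by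
    rw [m2_diagonal, det_diagonal]
    simp [Fin.prod_univ_six, Fin.prod_univ_four]
    ring
  rw [h, m2_mul, m2_mul, det_mul, det_mul, m2_prod_transvec_det, m2_prod_transvec_det,
    hdet3, hD, one_mul, mul_one, one_pow]
end

section
/- For a 4×4 matrix a of rank at most 2, and any pair i₁ < i₂, the product of a with the 4×4 matrix built from the 2×2 minors M_{i₁i₂}^{jk} of a (arranged as: column 1 = (M^{23}, -M^{13}, M^{12}, 0)ᵀ, column 2 = (M^{24}, -M^{14}, 0, M^{12})ᵀ, column 3 = (M^{34}, 0, -M^{14}, M^{13})ᵀ, column 4 = (0, M^{34}, -M^{24}, M^{23})ᵀ) is the zero matrix. -/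
open Matrix

/-- Any 3×3 minor of a 4×4 matrix of rank at most 2 vanishes. -/
lemma minor3_zero {K : Type*} [Field K] (a : Matrix (Fin 4) (Fin 4) K) (h : a.rank ≤ 2)
    (r c : Fin 3 → Fin 4) : (a.submatrix r c).det = 0 := by
  have hdep : ¬ LinearIndependent K (fun i : Fin 3 => a (r i)) := by
    intro li
    have h1 : Module.finrank K (Submodule.span K (Set.range fun i : Fin 3 => a (r i))) = 3 := by
      rw [finrank_span_eq_card li]; simp
    have h2 : Submodule.span K (Set.range fun i : Fin 3 => a (r i)) ≤
        Submodule.span K (Set.range a) := by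
      apply Submodule.span_mono
      rintro _ ⟨i, rfl⟩; exact ⟨r i, rfl⟩
    have h3 := Submodule.finrank_mono h2
    have h4 : a.rank = Module.finrank K (Submodule.span K (Set.range a)) :=
      Matrix.rank_eq_finrank_span_row a
    rw [h1, ← h4] at h3
    omega
  obtain ⟨g, hg, i, hgi⟩ := Fintype.not_linearIndependent_iff.mp hdep
  rw [← Matrix.exists_vecMul_eq_zero_iff]
  refine ⟨g, fun hc => hgi (by rw [hc]; rfl), ?_⟩
  ext k
  have := congrFun hg (c k)
  simpa [Matrix.vecMul, dotProduct, Matrix.submatrix, Finset.sum_apply] using this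

/-- If a 4×4 matrix `a` has rank at most 2, then for any rows i₁ < i₂ the product
of `a` with the matrix of order-2 cofactors based on (i₁,i₂) vanishes.
(Column indices in the minors `M^{jk}` below are 1-based, as in the paper.) -/
theorem rank_le_two_mul_cofactor2 {K : Type*} [Field K]
    (a : Matrix (Fin 4) (Fin 4) K) (h : a.rank ≤ 2)
    (i₁ i₂ : Fin 4) (hi : i₁ < i₂) :
    a * !![minor2 a (i₁, i₂) (1, 2), minor2 a (i₁, i₂) (1, 3),
             minor2 a (i₁, i₂) (2, 3), 0;
           -minor2 a (i₁, i₂) (0, 2), -minor2 a (i₁, i₂) (0, 3),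
             0, minor2 a (i₁, i₂) (2, 3);
           minor2 a (i₁, i₂) (0, 1), 0,
             -minor2 a (i₁, i₂) (0, 3), -minor2 a (i₁, i₂) (1, 3);
           0, minor2 a (i₁, i₂) (0, 1),
             minor2 a (i₁, i₂) (0, 2), minor2 a (i₁, i₂) (1, 2)] = 0 := by
  ext i j
  have key : ∀ c₁ c₂ c₃ : Fin 4, (a.submatrix ![i, i₁, i₂] ![c₁, c₂, c₃]).det = 0 :=
    fun c₁ c₂ c₃ => minor3_zero a h _ _
  have k1 := key 0 1 2
  have k2 := key 0 1 3
  have k3 := key 0 2 3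
  have k4 := key 1 2 3
  simp only [Matrix.det_fin_three, Matrix.submatrix_apply] at k1 k2 k3 k4
  simp only [Matrix.cons_val_zero, Matrix.cons_val_one, Matrix.head_cons,
    Matrix.cons_val_two, Matrix.tail_cons] at k1 k2 k3 k4
  fin_cases j
  · simp only [minor2, Matrix.det_fin_two]
    simp [Matrix.mul_apply, Fin.sum_univ_four]
    linear_combination k1
  · simp only [minor2, Matrix.det_fin_two]
    simp [Matrix.mul_apply, Fin.sum_univ_four]
    linear_combination k2
  · simp only [minor2, Matrix.det_fin_two]
    simp [Matrix.mul_apply, Fin.sum_univ_four]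
    linear_combination k3
  · simp only [minor2, Matrix.det_fin_two]
    simp [Matrix.mul_apply, Fin.sum_univ_four]
    linear_combination k4
end

section
/- For a 6×6 diagonal matrix b = Diag(μ₁,...,μ₆) with all μᵢ nonzero, there exists a 4×4 matrix a ∈ GL(4,K) with m₂(a) = b if and only if μ₁μ₆ = μ₂μ₅ = μ₃μ₄ and the quantities μ₁μ₂/μ₄ (equivalently μ₁μ₃/μ₅, μ₂μ₃/μ₆) admit a square root in K. -/
open Matrix

lemma minor2_apply {K : Type*} [CommRing K] (a : Matrix (Fin 4) (Fin 4) K)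
    (i j k l : Fin 4) : minor2 a (i, j) (k, l) = a i k * a j l - a i l * a j k := by
  rw [minor2, Matrix.det_fin_two]; simp [Matrix.submatrix_apply]

lemma aux {K : Type*} [Field K] {p q r s t u m : K} (hm : m ≠ 0)
    (e1 : p * t - q * s = m) (e2 : p * u = r * s) (e3 : q * u = r * t) : r = 0 := by
  have hr : r * m = 0 := by linear_combination (-r) * e1 + q * e2 - p * e3
  rcases mul_eq_zero.mp hr with h | h
  · exact h
  · exact absurd h hm

/-- A diagonal matrix Diag(μ₁,…,μ₆) with all μᵢ ≠ 0 is the second compound of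
some a ∈ GL(4,K) iff μ₁μ₆ = μ₂μ₅ = μ₃μ₄ and μ₁μ₂/μ₄ is a square in K. -/
theorem diagonal_eq_m2_iff {K : Type*} [Field K] (μ : Fin 6 → K)
    (hμ : ∀ i, μ i ≠ 0) :
    (∃ a : Matrix (Fin 4) (Fin 4) K, IsUnit a.det ∧ m2 a = Matrix.diagonal μ) ↔
      (μ 0 * μ 5 = μ 1 * μ 4 ∧ μ 1 * μ 4 = μ 2 * μ 3 ∧
        ∃ x : K, x ^ 2 = μ 0 * μ 1 / μ 3) := by
  constructor
  · rintro ⟨a, -, h⟩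
    have hd : ∀ i, minor2 a (pr i) (pr i) = μ i := fun i => by
      have := congrFun (congrFun h i) i
      simpa [m2, Matrix.diagonal_apply_eq] using this
    have h0 : ∀ i j, i ≠ j → minor2 a (pr i) (pr j) = 0 := fun i j hij => by
      have := congrFun (congrFun h i) j
      simpa [m2, Matrix.diagonal_apply_ne _ hij] using this
    have z01 : a 0 1 = 0 := by
      have e1 := hd 1; have e2 := h0 1 0 (by decide); have e3 := h0 1 3 (by decide)
      simp only [pr, minor2_apply] at e1 e2 e3
      exact aux (p := a 0 0) (q := a 0 2) (s := a 2 0) (t := a 2 2) (u := a 2 1) (hμ 1)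
        (by first | linear_combination e1 | linear_combination -e1)
        (by first | linear_combination e2 | linear_combination -e2)
        (by first | linear_combination e3 | linear_combination -e3)
    have z02 : a 0 2 = 0 := by
      have e1 := hd 0; have e2 := h0 0 1 (by decide); have e3 := h0 0 3 (by decide)
      simp only [pr, minor2_apply] at e1 e2 e3
      exact aux (p := a 0 0) (q := a 0 1) (s := a 1 0) (t := a 1 1) (u := a 1 2) (hμ 0)
        (by first | linear_combination e1 | linear_combination -e1)
        (by first | linear_combination e2 | linear_combination -e2)
        (by first | linear_combination e3 | linear_combination -e3)
    have z03 : a 0 3 = 0 := by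
      have e1 := hd 0; have e2 := h0 0 2 (by decide); have e3 := h0 0 4 (by decide)
      simp only [pr, minor2_apply] at e1 e2 e3
      exact aux (p := a 0 0) (q := a 0 1) (s := a 1 0) (t := a 1 1) (u := a 1 3) (hμ 0)
        (by first | linear_combination e1 | linear_combination -e1)
        (by first | linear_combination e2 | linear_combination -e2)
        (by first | linear_combination e3 | linear_combination -e3)
    have z10 : a 1 0 = 0 := by
      have e1 := hd 3; have e2 := h0 3 0 (by decide); have e3 := h0 3 1 (by decide)
      simp only [pr, minor2_apply] at e1 e2 e3
      exact aux (p := a 1 1) (q := a 1 2) (s := a 2 1) (t := a 2 2) (u := a 2 0) (hμ 3)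
        (by first | linear_combination e1 | linear_combination -e1)
        (by first | linear_combination e2 | linear_combination -e2)
        (by first | linear_combination e3 | linear_combination -e3)
    have z12 : a 1 2 = 0 := by
      have e1 := hd 0; have e2 := h0 0 3 (by decide); have e3 := h0 0 1 (by decide)
      simp only [pr, minor2_apply] at e1 e2 e3
      exact aux (p := a 1 1) (q := a 1 0) (s := a 0 1) (t := a 0 0) (u := a 0 2) (hμ 0)
        (by first | linear_combination e1 | linear_combination -e1)
        (by first | linear_combination e2 | linear_combination -e2)
        (by first | linear_combination e3 | linear_combination -e3)
    have z13 : a 1 3 = 0 := by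
      have e1 := hd 0; have e2 := h0 0 4 (by decide); have e3 := h0 0 2 (by decide)
      simp only [pr, minor2_apply] at e1 e2 e3
      exact aux (p := a 1 1) (q := a 1 0) (s := a 0 1) (t := a 0 0) (u := a 0 3) (hμ 0)
        (by first | linear_combination e1 | linear_combination -e1)
        (by first | linear_combination e2 | linear_combination -e2)
        (by first | linear_combination e3 | linear_combination -e3)
    have z20 : a 2 0 = 0 := by
      have e1 := hd 3; have e2 := h0 3 1 (by decide); have e3 := h0 3 0 (by decide)
      simp only [pr, minor2_apply] at e1 e2 e3
      exact aux (p := a 2 2) (q := a 2 1) (s := a 1 2) (t := a 1 1) (u := a 1 0) (hμ 3)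
        (by first | linear_combination e1 | linear_combination -e1)
        (by first | linear_combination e2 | linear_combination -e2)
        (by first | linear_combination e3 | linear_combination -e3)
    have z21 : a 2 1 = 0 := by
      have e1 := hd 1; have e2 := h0 1 3 (by decide); have e3 := h0 1 0 (by decide)
      simp only [pr, minor2_apply] at e1 e2 e3
      exact aux (p := a 2 2) (q := a 2 0) (s := a 0 2) (t := a 0 0) (u := a 0 1) (hμ 1)
        (by first | linear_combination e1 | linear_combination -e1)
        (by first | linear_combination e2 | linear_combination -e2)
        (by first | linear_combination e3 | linear_combination -e3)
    have z23 : a 2 3 = 0 := by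
      have e1 := hd 1; have e2 := h0 1 5 (by decide); have e3 := h0 1 2 (by decide)
      simp only [pr, minor2_apply] at e1 e2 e3
      exact aux (p := a 2 2) (q := a 2 0) (s := a 0 2) (t := a 0 0) (u := a 0 3) (hμ 1)
        (by first | linear_combination e1 | linear_combination -e1)
        (by first | linear_combination e2 | linear_combination -e2)
        (by first | linear_combination e3 | linear_combination -e3)
    have z30 : a 3 0 = 0 := by
      have e1 := hd 4; have e2 := h0 4 2 (by decide); have e3 := h0 4 0 (by decide)
      simp only [pr, minor2_apply] at e1 e2 e3
      exact aux (p := a 3 3) (q := a 3 1) (s := a 1 3) (t := a 1 1) (u := a 1 0) (hμ 4)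
        (by first | linear_combination e1 | linear_combination -e1)
        (by first | linear_combination e2 | linear_combination -e2)
        (by first | linear_combination e3 | linear_combination -e3)
    have z31 : a 3 1 = 0 := by
      have e1 := hd 5; have e2 := h0 5 4 (by decide); have e3 := h0 5 3 (by decide)
      simp only [pr, minor2_apply] at e1 e2 e3
      exact aux (p := a 3 3) (q := a 3 2) (s := a 2 3) (t := a 2 2) (u := a 2 1) (hμ 5)
        (by first | linear_combination e1 | linear_combination -e1)
        (by first | linear_combination e2 | linear_combination -e2)
        (by first | linear_combination e3 | linear_combination -e3)
    have z32 : a 3 2 = 0 := by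
      have e1 := hd 4; have e2 := h0 4 5 (by decide); have e3 := h0 4 3 (by decide)
      simp only [pr, minor2_apply] at e1 e2 e3
      exact aux (p := a 3 3) (q := a 3 1) (s := a 1 3) (t := a 1 1) (u := a 1 2) (hμ 4)
        (by first | linear_combination e1 | linear_combination -e1)
        (by first | linear_combination e2 | linear_combination -e2)
        (by first | linear_combination e3 | linear_combination -e3)
    have m0 := hd 0; have m1 := hd 1; have m2e := hd 2
    have m3 := hd 3; have m4 := hd 4; have m5 := hd 5
    simp only [pr, minor2_apply] at m0 m1 m2e m3 m4 m5
    have M0 : a 0 0 * a 1 1 = μ 0 := by linear_combination m0 + a 1 0 * z01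
    have M1 : a 0 0 * a 2 2 = μ 1 := by linear_combination m1 + a 2 0 * z02
    have M2 : a 0 0 * a 3 3 = μ 2 := by linear_combination m2e + a 3 0 * z03
    have M3 : a 1 1 * a 2 2 = μ 3 := by linear_combination m3 + a 2 1 * z12
    have M4 : a 1 1 * a 3 3 = μ 4 := by linear_combination m4 + a 3 1 * z13
    have M5 : a 2 2 * a 3 3 = μ 5 := by linear_combination m5 + a 3 2 * z23
    refine ⟨?_, ?_, ⟨a 0 0, ?_⟩⟩
    · linear_combination -((a 2 2 * a 3 3) * M0) - μ 0 * M5 + (a 1 1 * a 3 3) * M1 + μ 1 * M4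
    · linear_combination -((a 1 1 * a 3 3) * M1) - μ 1 * M4 + (a 1 1 * a 2 2) * M2 + μ 2 * M3
    · rw [eq_div_iff (hμ 3)]
      linear_combination (-(a 0 0)^2) * M3 + μ 1 * M0 + (a 0 0 * a 1 1) * M1
  · rintro ⟨h1, h2, x, hx⟩
    have hq : μ 0 * μ 1 / μ 3 ≠ 0 := div_ne_zero (mul_ne_zero (hμ 0) (hμ 1)) (hμ 3)
    have hx0 : x ≠ 0 := by
      intro hz; apply hq; rw [← hx, hz]; ring
    have hx' : x ^ 2 * μ 3 = μ 0 * μ 1 := by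
      rw [hx, div_mul_cancel₀ _ (hμ 3)]
    refine ⟨Matrix.diagonal ![x, μ 0 / x, μ 1 / x, μ 2 / x], ?_, ?_⟩
    · rw [Matrix.det_diagonal, Fin.prod_univ_four]
      exact isUnit_iff_ne_zero.2 (by
        simp [mul_eq_zero, div_eq_zero_iff, hx0, hμ 0, hμ 1, hμ 2])
    · have g4 : μ 0 * μ 2 = μ 4 * x ^ 2 :=
        mul_left_cancel₀ (hμ 3) (by linear_combination (-(μ 4)) * hx' + (-(μ 0)) * h2)
      have g5 : μ 1 * μ 2 = μ 5 * x ^ 2 :=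
        mul_left_cancel₀ (hμ 3) (by
          linear_combination (-(μ 5)) * hx' + (-(μ 1)) * h1 + (-(μ 1)) * h2)
      ext i j
      fin_cases i <;> fin_cases j <;>
        simp [m2, pr, minor2_apply, Matrix.diagonal_apply] <;>
        field_simp <;>
        first
          | linear_combination hx'
          | linear_combination -hx'
          | linear_combination g4
          | linear_combination g5
          | ring
end

section
/- For an n×n matrix a, det(a) = Σ_{j<k} (-1)^(j+k+1) M_{12}^{jk} · M̄_{12}^{jk}, where the sum is over all pairs 1 ≤ j < k ≤ n, M_{12}^{jk} is the 2×2 minor of a on rows 1,2 and columns j,k, and M̄_{12}^{jk} is the (n−2)×(n−2) minor of a on rows {3,...,n} and columns {1,...,n}∖{j,k}. -/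
open Matrix

noncomputable def compEmb {n : ℕ} (j k : Fin (n + 2)) (h : j ≠ k) :
    Fin n → Fin (n + 2) :=
  (({j, k}ᶜ : Finset (Fin (n + 2))).orderEmbOfFin (by
    rw [Finset.card_compl, Finset.card_insert_of_notMem (by simpa using h),
      Finset.card_singleton]
    simp))

lemma compEmb_strictMono {n : ℕ} (j k : Fin (n + 2)) (h : j ≠ k) :
    StrictMono (compEmb j k h) :=
  (Finset.orderEmbOfFin _ _).strictMono

lemma compEmb_mem {n : ℕ} (j k : Fin (n + 2)) (h : j ≠ k) (x : Fin n) :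
    compEmb j k h x ∈ ({j, k}ᶜ : Finset (Fin (n + 2))) :=
  Finset.orderEmbOfFin_mem _ _ _

lemma compEmb_comm {n : ℕ} (j k : Fin (n + 2)) (h : j ≠ k) :
    compEmb j k h = compEmb k j h.symm := by
  apply Finset.orderEmbOfFin_unique
  · intro x
    have := compEmb_mem j k h x
    simpa [Finset.pair_comm k j] using this
  · exact compEmb_strictMono j k h

lemma compEmb_succAbove {n : ℕ} (j : Fin (n + 2)) (i : Fin (n + 1)) :
    compEmb j (j.succAbove i) (Fin.ne_succAbove j i) = j.succAbove ∘ i.succAbove := by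
  symm
  apply Finset.orderEmbOfFin_unique
  · intro x
    simp only [Finset.mem_compl, Finset.mem_insert, Finset.mem_singleton, Function.comp_apply]
    push_neg
    exact ⟨Fin.succAbove_ne j _, fun hc => Fin.succAbove_ne i x
      ((Fin.succAbove_right_injective (p := j)) hc)⟩
  · exact (Fin.strictMono_succAbove j).comp (Fin.strictMono_succAbove i)

/-- The ordered-pair term in the two-row Laplace expansion. -/
noncomputable def Gterm {n : ℕ} {R : Type*} [CommRing R]
    (a : Matrix (Fin (n + 2)) (Fin (n + 2)) R) (j k : Fin (n + 2)) : R :=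
  if h : j ≠ k then
    (if j < k then (-1 : R) ^ (j.val + k.val + 1) else (-1 : R) ^ (j.val + k.val)) *
      a 0 j * a 1 k *
      (a.submatrix (fun r : Fin n => r.addNat 2) (compEmb j k h)).det
  else 0

lemma row_eq {n : ℕ} : (Fin.succ ∘ Fin.succ : Fin n → Fin (n + 2)) =
    fun r : Fin n => r.addNat 2 := by
  funext r
  exact Fin.ext (by simp [Fin.addNat])

lemma sign_succAbove {R : Type*} [CommRing R] {n : ℕ} (j : Fin (n + 2)) (i : Fin (n + 1)) :
    (if j < j.succAbove i then (-1 : R) ^ (j.val + (j.succAbove i).val + 1)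
      else (-1 : R) ^ (j.val + (j.succAbove i).val)) = (-1 : R) ^ (j.val + i.val) := by
  rcases Fin.lt_or_le i.castSucc j with hc | hc
  · rw [Fin.succAbove_of_castSucc_lt _ _ hc, if_neg (by simpa using not_lt_of_gt hc)]
    simp
  · rw [Fin.succAbove_of_le_castSucc _ _ hc,
      if_pos (lt_of_le_of_lt hc (Fin.castSucc_lt_succ (i := i)))]
    rw [show j.val + (i.succ).val + 1 = (j.val + i.val) + 2 by simp [Fin.val_succ]; ring,
      pow_add]
    norm_num

lemma det_eq_sum_G {n : ℕ} {R : Type*} [CommRing R]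
    (a : Matrix (Fin (n + 2)) (Fin (n + 2)) R) :
    a.det = ∑ j : Fin (n + 2), ∑ k : Fin (n + 2), Gterm a j k := by
  rw [det_succ_row_zero]
  refine Finset.sum_congr rfl fun j _ => ?_
  rw [det_succ_row_zero, Finset.mul_sum,
    Fin.sum_univ_succAbove (fun k => Gterm a j k) j]
  rw [show Gterm a j j = 0 from dif_neg (by simp)]
  rw [zero_add]
  refine Finset.sum_congr rfl fun i _ => ?_
  rw [Gterm, dif_pos (Fin.ne_succAbove j i), sign_succAbove, compEmb_succAbove,
    ← row_eq, ← submatrix_submatrix]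
  simp only [submatrix_apply]
  have h0 : (Fin.succ (0 : Fin (n + 1))) = (1 : Fin (n + 2)) := rfl
  rw [h0]
  ring

/-- Laplace expansion of an (n+2)×(n+2) determinant along the first two rows:
`det a = ∑_{j<k} (-1)^{j+k+1} M_{12}^{jk} · M̄_{12}^{jk}` (1-based indices),
where `M_{12}^{jk}` is the 2×2 minor on rows 1,2 and columns j,k, and
`M̄_{12}^{jk}` is the complementary minor on rows 3,…,n+2 and the remaining
columns. -/
theorem det_eq_laplace_two_rows {n : ℕ} {R : Type*} [CommRing R]
    (a : Matrix (Fin (n + 2)) (Fin (n + 2)) R) :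
    a.det = ∑ p : Fin (n + 2) × Fin (n + 2),
      if h : p.1 < p.2 then
        (-1 : R) ^ ((p.1.val + 1) + (p.2.val + 1) + 1) *
          (a.submatrix ![0, 1] ![p.1, p.2]).det *
          (a.submatrix (fun r : Fin n => r.addNat 2) (compEmb p.1 p.2 h.ne)).det
      else 0 := by
  classical
  set G1 : Fin (n + 2) × Fin (n + 2) → R := fun p =>
    if h : p.1 < p.2 then (-1 : R) ^ (p.1.val + p.2.val + 1) * a 0 p.1 * a 1 p.2 *
      (a.submatrix (fun r : Fin n => r.addNat 2) (compEmb p.1 p.2 h.ne)).det else 0 with hG1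
  set G2 : Fin (n + 2) × Fin (n + 2) → R := fun p =>
    if h : p.2 < p.1 then (-1 : R) ^ (p.1.val + p.2.val) * a 0 p.1 * a 1 p.2 *
      (a.submatrix (fun r : Fin n => r.addNat 2) (compEmb p.1 p.2 h.ne')).det else 0 with hG2
  have hsplit : ∀ p : Fin (n + 2) × Fin (n + 2), Gterm a p.1 p.2 = G1 p + G2 p := by
    rintro ⟨j, k⟩
    rcases lt_trichotomy j k with h | h | h
    · rw [hG1, hG2]
      simp only [Gterm, dif_pos h.ne, dif_pos h, dif_neg (not_lt_of_gt h), if_pos h, add_zero]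
    · subst h
      simp [Gterm, hG1, hG2]
    · rw [hG1, hG2]
      simp only [Gterm, dif_pos h.ne', dif_neg (not_lt_of_gt h), dif_pos h, if_neg
        (not_lt_of_gt h), zero_add]
  rw [det_eq_sum_G, ← Fintype.sum_prod_type']
  calc (∑ p : Fin (n + 2) × Fin (n + 2), Gterm a p.1 p.2)
      = ∑ p : Fin (n + 2) × Fin (n + 2), (G1 p + G2 p) :=
        Finset.sum_congr rfl fun p _ => hsplit p
    _ = (∑ p : Fin (n + 2) × Fin (n + 2), G1 p) + ∑ p : Fin (n + 2) × Fin (n + 2), G2 p :=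
        Finset.sum_add_distrib
    _ = (∑ p : Fin (n + 2) × Fin (n + 2), G1 p) +
        ∑ p : Fin (n + 2) × Fin (n + 2), G2 (p.2, p.1) := by
        congr 1
        exact Fintype.sum_equiv (Equiv.prodComm _ _) _ _ (fun p => rfl)
    _ = ∑ p : Fin (n + 2) × Fin (n + 2), (G1 p + G2 (p.2, p.1)) :=
        Finset.sum_add_distrib.symm
    _ = _ := by
        refine Finset.sum_congr rfl fun p _ => ?_
        rcases lt_or_ge p.1 p.2 with h | h
        · rw [dif_pos h, hG1, hG2]
          simp only [dif_pos h]
          rw [compEmb_comm p.2 p.1 h.ne']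
          have hs : (-1 : R) ^ ((p.1.val + 1) + (p.2.val + 1) + 1) =
              (-1 : R) ^ (p.1.val + p.2.val + 1) := by
            rw [show (p.1.val + 1) + (p.2.val + 1) + 1 = (p.1.val + p.2.val + 1) + 2 by ring,
              pow_add]
            norm_num
          have hs2 : (-1 : R) ^ (p.2.val + p.1.val) = -(-1 : R) ^ (p.1.val + p.2.val + 1) := by
            rw [pow_succ, Nat.add_comm p.2.val p.1.val]
            ring
          rw [hs, hs2, det_fin_two]
          simp only [submatrix_apply, Matrix.cons_val_zero, Matrix.cons_val_one, Matrix.head_cons]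
          ring
        · rw [dif_neg (not_lt_of_ge h), hG1, hG2]
          simp only [dif_neg (not_lt_of_ge h)]
          simp
end

section
/- For an n×n matrix a and 1 ≤ p ≤ n, det(a) = Σ (-1)^(j₁+⋯+j_p + p(p+1)/2) M_{1⋯p}^{j₁⋯j_p} · M̄, summed over all p-element column subsets j₁<⋯<j_p, where M_{1⋯p}^{j₁⋯j_p} is the p×p minor on rows 1,...,p and columns j₁,...,j_p, and M̄ is the complementary (n−p)×(n−p) minor on rows p+1,...,n and the complementary columns. -/
open Matrix

namespace LaplaceAux

open Equiv Equiv.Perm Finset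

/-- `sign` agrees with `signAux` on `Fin n`. -/
theorem sign_eq_signAux {n : ℕ} (f : Perm (Fin n)) : sign f = signAux f := by
  refine Equiv.Perm.swap_induction_on f ?_ fun g x y hxy ih => ?_
  · rw [_root_.map_one, signAux_one]
  · rw [_root_.map_mul, signAux_mul, ih, sign_swap hxy, signAux_swap hxy]

/-- `sign` as `(-1)` to the number of inversions. -/
theorem sign_eq_pow_card {n : ℕ} (f : Perm (Fin n)) :
    sign f = (-1) ^ #((finPairsLT n).filter fun x => f x.1 ≤ f x.2) := by
  classical
  rw [sign_eq_signAux]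
  unfold signAux
  rw [← Finset.prod_filter_mul_prod_filter_not (finPairsLT n) (fun x => f x.1 ≤ f x.2)]
  rw [Finset.prod_congr rfl (g := fun _ => (-1 : ℤˣ))
      (fun x hx => if_pos (Finset.mem_filter.mp hx).2),
    Finset.prod_congr rfl (g := fun _ => (1 : ℤˣ))
      (fun x hx => if_neg (Finset.mem_filter.mp hx).2),
    Finset.prod_const, Finset.prod_const, one_pow, mul_one]

variable {n p : ℕ}

theorem card_compl_eq (hp : p ≤ n) {S : Finset (Fin n)} (hS : S.card = p) :
    Sᶜ.card = n - p := by
  rw [Finset.card_compl, hS, Fintype.card_fin]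

/-- The fixed splitting of `Fin n` as `Fin p ⊕ Fin (n-p)`. -/
def rE (hp : p ≤ n) : Fin p ⊕ Fin (n - p) ≃ Fin n :=
  finSumFinEquiv.trans (finCongr (Nat.add_sub_cancel' hp))

@[simp] theorem rE_inl (hp : p ≤ n) (i : Fin p) :
    rE hp (Sum.inl i) = Fin.castLE hp i := by
  ext; simp [rE]

@[simp] theorem rE_inr (hp : p ≤ n) (k : Fin (n - p)) :
    rE hp (Sum.inr k) = ⟨p + k.val, by omega⟩ := by
  ext; simp [rE]

/-- The splitting of `Fin n` according to `S`. -/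
def eE (hp : p ≤ n) {S : Finset (Fin n)} (hS : S.card = p) :
    Fin p ⊕ Fin (n - p) ≃ Fin n :=
  finSumEquivOfFinset hS (card_compl_eq hp hS)

theorem eE_inl (hp : p ≤ n) {S : Finset (Fin n)} (hS : S.card = p) (i : Fin p) :
    eE hp hS (Sum.inl i) = S.orderEmbOfFin hS i := rfl

theorem eE_inr (hp : p ≤ n) {S : Finset (Fin n)} (hS : S.card = p) (k : Fin (n - p)) :
    eE hp hS (Sum.inr k) = Sᶜ.orderEmbOfFin (card_compl_eq hp hS) k := rfl

theorem exists_emb {S : Finset (Fin n)} (hS : S.card = p) {a : Fin n} (ha : a ∈ S) :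
    ∃ i, S.orderEmbOfFin hS i = a := by
  have : a ∈ Set.range ⇑(S.orderEmbOfFin hS) := by
    rw [Finset.range_orderEmbOfFin]; exact ha
  exact this

/-- The permutation associated to `S`, `τ`, `ρ`. -/
def Φ (hp : p ≤ n) {S : Finset (Fin n)} (hS : S.card = p)
    (τ : Perm (Fin p)) (ρ : Perm (Fin (n - p))) : Perm (Fin n) :=
  (eE hp hS).symm.trans ((τ.sumCongr ρ).trans (rE hp))

theorem Φ_emb (hp : p ≤ n) {S : Finset (Fin n)} (hS : S.card = p)
    (τ : Perm (Fin p)) (ρ : Perm (Fin (n - p))) (i : Fin p) :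
    Φ hp hS τ ρ (S.orderEmbOfFin hS i) = Fin.castLE hp (τ i) := by
  simp only [Φ, Equiv.trans_apply, ← eE_inl hp hS, Equiv.symm_apply_apply,
    Equiv.Perm.sumCongr_apply, Sum.map_inl, rE_inl]

theorem Φ_embc (hp : p ≤ n) {S : Finset (Fin n)} (hS : S.card = p)
    (τ : Perm (Fin p)) (ρ : Perm (Fin (n - p))) (k : Fin (n - p)) :
    Φ hp hS τ ρ (Sᶜ.orderEmbOfFin (card_compl_eq hp hS) k) = ⟨p + (ρ k).val, by omega⟩ := by
  simp only [Φ, Equiv.trans_apply, ← eE_inr hp hS, Equiv.symm_apply_apply,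
    Equiv.Perm.sumCongr_apply, Sum.map_inr, rE_inr]

theorem mem_iff_lt (hp : p ≤ n) {S : Finset (Fin n)} (hS : S.card = p)
    (τ : Perm (Fin p)) (ρ : Perm (Fin (n - p))) (j : Fin n) :
    j ∈ S ↔ (Φ hp hS τ ρ j).val < p := by
  constructor
  · intro hj
    obtain ⟨i, rfl⟩ := exists_emb hS hj
    rw [Φ_emb]
    exact (τ i).isLt
  · intro hj
    by_contra hjS
    obtain ⟨k, rfl⟩ := exists_emb (card_compl_eq hp hS) (Finset.mem_compl.mpr hjS)
    rw [Φ_embc] at hj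
    simp at hj

/-- The shuffle permutation associated to `S`. -/
def πE (hp : p ≤ n) {S : Finset (Fin n)} (hS : S.card = p) : Perm (Fin n) :=
  (eE hp hS).symm.trans (rE hp)

theorem πE_emb (hp : p ≤ n) {S : Finset (Fin n)} (hS : S.card = p) (i : Fin p) :
    πE hp hS (S.orderEmbOfFin hS i) = Fin.castLE hp i := by
  simp only [πE, Equiv.trans_apply, ← eE_inl hp hS, Equiv.symm_apply_apply, rE_inl]

theorem πE_embc (hp : p ≤ n) {S : Finset (Fin n)} (hS : S.card = p) (k : Fin (n - p)) :
    πE hp hS (Sᶜ.orderEmbOfFin (card_compl_eq hp hS) k) = ⟨p + k.val, by omega⟩ := by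
  simp only [πE, Equiv.trans_apply, ← eE_inr hp hS, Equiv.symm_apply_apply, rE_inr]

theorem sign_Φ (hp : p ≤ n) {S : Finset (Fin n)} (hS : S.card = p)
    (τ : Perm (Fin p)) (ρ : Perm (Fin (n - p))) :
    sign (Φ hp hS τ ρ) = sign (πE hp hS) * (sign τ * sign ρ) := by
  have hdec : Φ hp hS τ ρ =
      ((eE hp hS).symm.trans ((τ.sumCongr ρ).trans (eE hp hS))).trans (πE hp hS) := by
    ext j
    simp [Φ, πE, Equiv.trans_apply]
  rw [hdec, sign_trans, ← Equiv.trans_assoc, sign_symm_trans_trans, sign_sumCongr]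

theorem inversion_iff (hp : p ≤ n) {S : Finset (Fin n)} (hS : S.card = p)
    {a b : Fin n} (hba : b < a) :
    πE hp hS a ≤ πE hp hS b ↔ a ∈ S ∧ b ∉ S := by
  by_cases haS : a ∈ S <;> by_cases hbS : b ∈ S
  · obtain ⟨i, rfl⟩ := exists_emb hS haS
    obtain ⟨i', rfl⟩ := exists_emb hS hbS
    rw [πE_emb, πE_emb]
    have hii : i' < i := (S.orderEmbOfFin hS).lt_iff_lt.mp hba
    simp only [Fin.le_def, Fin.coe_castLE]
    constructor
    · intro h
      exact absurd h (by have := Fin.lt_def.mp hii; omega)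
    · rintro ⟨-, h⟩; exact absurd hbS h
  · obtain ⟨i, rfl⟩ := exists_emb hS haS
    obtain ⟨k, rfl⟩ := exists_emb (card_compl_eq hp hS) (Finset.mem_compl.mpr hbS)
    rw [πE_emb, πE_embc]
    simp only [Fin.le_def, Fin.coe_castLE]
    refine ⟨fun _ => ⟨haS, hbS⟩, fun _ => ?_⟩
    have := i.isLt
    omega
  · obtain ⟨k, rfl⟩ := exists_emb (card_compl_eq hp hS) (Finset.mem_compl.mpr haS)
    obtain ⟨i, rfl⟩ := exists_emb hS hbS
    rw [πE_emb, πE_embc]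
    simp only [Fin.le_def, Fin.coe_castLE]
    constructor
    · intro h
      have := i.isLt
      omega
    · rintro ⟨h, -⟩; exact absurd h haS
  · obtain ⟨k, rfl⟩ := exists_emb (card_compl_eq hp hS) (Finset.mem_compl.mpr haS)
    obtain ⟨k', rfl⟩ := exists_emb (card_compl_eq hp hS) (Finset.mem_compl.mpr hbS)
    rw [πE_embc, πE_embc]
    have hkk : k' < k := (Sᶜ.orderEmbOfFin (card_compl_eq hp hS)).lt_iff_lt.mp hba
    simp only [Fin.le_def]
    constructor
    · intro h
      exact absurd h (by have := Fin.lt_def.mp hkk; simp; omega)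
    · rintro ⟨h, -⟩; exact absurd h haS

theorem rank_card (hp : p ≤ n) {S : Finset (Fin n)} (hS : S.card = p) (i : Fin p) :
    #(univ.filter fun b => b < S.orderEmbOfFin hS i ∧ b ∈ S) = i.val := by
  classical
  have himg : (univ.filter fun b => b < S.orderEmbOfFin hS i ∧ b ∈ S) =
      (univ.filter fun i' : Fin p => i' < i).image (S.orderEmbOfFin hS) := by
    ext b
    simp only [Finset.mem_filter, Finset.mem_univ, true_and, Finset.mem_image]
    constructor
    · rintro ⟨hb, hbS⟩
      obtain ⟨i', rfl⟩ := exists_emb hS hbS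
      exact ⟨i', (S.orderEmbOfFin hS).lt_iff_lt.mp hb, rfl⟩
    · rintro ⟨i', hi', rfl⟩
      exact ⟨(S.orderEmbOfFin hS).lt_iff_lt.mpr hi', Finset.orderEmbOfFin_mem S hS i'⟩
  rw [himg, Finset.card_image_of_injective _ (S.orderEmbOfFin hS).injective]
  have : (univ.filter fun i' : Fin p => i' < i) = Finset.Iio i := by
    ext i'; simp
  rw [this, Fin.card_Iio]

theorem count_lt (a : Fin n) : #(univ.filter fun b : Fin n => b < a) = a.val := by
  have : (univ.filter fun b : Fin n => b < a) = Finset.Iio a := by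
    ext b; simp
  rw [this, Fin.card_Iio]

theorem inversions_card (hp : p ≤ n) {S : Finset (Fin n)} (hS : S.card = p) :
    #((finPairsLT n).filter fun x => πE hp hS x.1 ≤ πE hp hS x.2) + p * (p - 1) / 2
      = ∑ j ∈ S, j.val := by
  classical
  have hset : ((finPairsLT n).filter fun x => πE hp hS x.1 ≤ πE hp hS x.2)
      = S.sigma fun a => univ.filter fun b => b < a ∧ b ∉ S := by
    ext x
    simp only [Finset.mem_filter, mem_finPairsLT, Finset.mem_sigma, Finset.mem_univ, true_and]
    constructor
    · rintro ⟨hlt, hle⟩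
      obtain ⟨h1, h2⟩ := (inversion_iff hp hS hlt).mp hle
      exact ⟨h1, hlt, h2⟩
    · rintro ⟨h1, hlt, h2⟩
      exact ⟨hlt, (inversion_iff hp hS hlt).mpr ⟨h1, h2⟩⟩
  rw [hset, Finset.card_sigma]
  -- per-element counting
  have hsplit : ∀ a ∈ S, #(univ.filter fun b => b < a ∧ b ∉ S)
      + #(univ.filter fun b => b < a ∧ b ∈ S) = a.val := by
    intro a _
    have h1 : (univ.filter fun b => b < a ∧ b ∉ S)
        = (univ.filter fun b : Fin n => b < a).filter fun b => b ∉ S := by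
      rw [Finset.filter_filter]
    have h2 : (univ.filter fun b => b < a ∧ b ∈ S)
        = (univ.filter fun b : Fin n => b < a).filter fun b => ¬ b ∉ S := by
      rw [Finset.filter_filter]
      congr 1
      ext b
      simp
    rw [h1, h2, Finset.card_filter_add_card_filter_not, count_lt]
  have hsum1 : ∑ a ∈ S, #(univ.filter fun b => b < a ∧ b ∉ S)
      + ∑ a ∈ S, #(univ.filter fun b => b < a ∧ b ∈ S) = ∑ j ∈ S, j.val := by
    rw [← Finset.sum_add_distrib]
    exact Finset.sum_congr rfl hsplit
  have hrank : ∑ a ∈ S, #(univ.filter fun b => b < a ∧ b ∈ S) = p * (p - 1) / 2 := by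
    have hreidx : ∑ a ∈ S, #(univ.filter fun b => b < a ∧ b ∈ S)
        = ∑ i : Fin p, #(univ.filter fun b => b < S.orderEmbOfFin hS i ∧ b ∈ S) := by
      refine (Finset.sum_bij (fun i _ => S.orderEmbOfFin hS i) ?_ ?_ ?_ ?_).symm
      · intro i _; exact Finset.orderEmbOfFin_mem S hS i
      · intro i _ i' _ h
        exact (S.orderEmbOfFin hS).injective h
      · intro a ha
        obtain ⟨i, hi⟩ := exists_emb hS ha
        exact ⟨i, Finset.mem_univ i, hi⟩
      · intro i _; rfl
    rw [hreidx]
    have : ∀ i : Fin p, #(univ.filter fun b => b < S.orderEmbOfFin hS i ∧ b ∈ S) = i.val :=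
      rank_card hp hS
    rw [Finset.sum_congr rfl fun i _ => this i]
    rw [Fin.sum_univ_eq_sum_range (fun i => i) p]
    have := Finset.sum_range_id_mul_two p
    omega
  omega

theorem neg_one_pow_eq_of_even_add {R : Type*} [Ring R] {a b : ℕ} (h : Even (a + b)) :
    (-1 : R) ^ a = (-1 : R) ^ b := by
  have h2 : (-1 : R) ^ b * (-1 : R) ^ b = 1 := by
    rw [← pow_add]
    exact Even.neg_one_pow ⟨b, rfl⟩
  calc (-1 : R) ^ a = (-1 : R) ^ a * ((-1 : R) ^ b * (-1 : R) ^ b) := by rw [h2, mul_one]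
    _ = (-1 : R) ^ (a + b) * (-1 : R) ^ b := by rw [pow_add, mul_assoc]
    _ = (-1 : R) ^ b := by rw [h.neg_one_pow, one_mul]

/-- The sign of the shuffle, cast into `R`, as the statement's coefficient. -/
theorem sign_πE_cast {R : Type*} [CommRing R] (hp : p ≤ n) {S : Finset (Fin n)}
    (hS : S.card = p) :
    ((sign (πE hp hS) : ℤ) : R)
      = (-1 : R) ^ ((∑ j ∈ S, (j.val + 1)) + p * (p + 1) / 2) := by
  classical
  rw [sign_eq_pow_card]
  push_cast
  set N := #((finPairsLT n).filter fun x => πE hp hS x.1 ≤ πE hp hS x.2) with hN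
  have hcount := inversions_card hp hS
  refine neg_one_pow_eq_of_even_add ?_
  have hsum : ∑ j ∈ S, (j.val + 1) = (∑ j ∈ S, j.val) + p := by
    rw [Finset.sum_add_distrib, Finset.sum_const, hS, smul_eq_mul, mul_one]
  rw [hsum]
  have hA : p * (p - 1) / 2 * 2 = p * (p - 1) := by
    rcases Nat.eq_zero_or_pos p with h | h
    · simp [h]
    · have : Even (p * (p - 1)) := by
        have := Nat.even_mul_succ_self (p - 1)
        have hpp : (p - 1) + 1 = p := by omega
        rw [hpp] at this
        rwa [mul_comm]
      exact Nat.div_mul_cancel this.two_dvd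
  have hB : p * (p + 1) / 2 * 2 = p * (p + 1) := Nat.div_mul_cancel (Nat.even_mul_succ_self p).two_dvd
  obtain ⟨m, hm⟩ : ∃ m, m = p * p := ⟨_, rfl⟩
  have hA' : p * (p - 1) / 2 * 2 + p = m := by
    rw [hA]
    cases p with
    | zero => simp [hm]
    | succ q => rw [hm]; simp only [Nat.succ_sub_one]; ring
  have hB' : p * (p + 1) / 2 * 2 = m + p := by rw [hB, hm]; ring
  rw [Nat.even_iff]
  omega

end LaplaceAux

open Finset Equiv Equiv.Perm LaplaceAux

/-- General Laplace expansion of an n×n determinant along the first p rows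
(1-based row indices 1,…,p): `det a` equals the sum over p-element column
subsets S = {j₁<⋯<j_p} of `(-1)^{(1+⋯+p)+(j₁+⋯+j_p)}` times the p×p minor on
rows 1,…,p and columns S, times the complementary (n−p)×(n−p) minor on rows
p+1,…,n and the complementary columns. -/
theorem det_eq_laplace_first_p_rows {n p : ℕ} (hp : p ≤ n)
    {R : Type*} [CommRing R] (a : Matrix (Fin n) (Fin n) R) :
    a.det = ∑ S : {S : Finset (Fin n) // S.card = p},
      (-1 : R) ^ ((∑ j ∈ S.1, (j.val + 1)) + p * (p + 1) / 2) *
        (a.submatrix (fun i : Fin p => Fin.castLE hp i)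
          (S.1.orderEmbOfFin S.2)).det *
        (a.submatrix (fun i : Fin (n - p) => (⟨p + i.val, by omega⟩ : Fin n))
          ((S.1ᶜ).orderEmbOfFin (by
            rw [Finset.card_compl, S.2]; simp))).det := by
  classical
  have hterm : ∀ (S : Finset (Fin n)) (hS : S.card = p),
      ((-1 : R) ^ ((∑ j ∈ S, (j.val + 1)) + p * (p + 1) / 2) *
        (a.submatrix (fun i : Fin p => Fin.castLE hp i) (S.orderEmbOfFin hS)).det *
        (a.submatrix (fun i : Fin (n - p) => (⟨p + i.val, by omega⟩ : Fin n))
          (Sᶜ.orderEmbOfFin (card_compl_eq hp hS))).det)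
      = ∑ τ : Perm (Fin p), ∑ ρ : Perm (Fin (n - p)),
          ((sign (Φ hp hS τ ρ) : ℤ) : R) * ∏ j, a (Φ hp hS τ ρ j) j := by
    intro S hS
    rw [Matrix.det_apply' (a.submatrix _ _), Matrix.det_apply' (a.submatrix _ _)]
    rw [mul_assoc, Finset.sum_mul_sum, Finset.mul_sum]
    refine Finset.sum_congr rfl fun τ _ => ?_
    rw [Finset.mul_sum]
    refine Finset.sum_congr rfl fun ρ _ => ?_
    have hprod : ∏ j, a (Φ hp hS τ ρ j) j
        = (∏ i, a (Fin.castLE hp (τ i)) (S.orderEmbOfFin hS i)) *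
          ∏ k, a (⟨p + (ρ k).val, by omega⟩ : Fin n)
            (Sᶜ.orderEmbOfFin (card_compl_eq hp hS) k) := by
      rw [← Equiv.prod_comp (eE hp hS) (fun j => a (Φ hp hS τ ρ j) j),
        Fintype.prod_sum_type]
      congr 1
      · exact Finset.prod_congr rfl fun i _ => by rw [eE_inl, Φ_emb]
      · exact Finset.prod_congr rfl fun k _ => by rw [eE_inr, Φ_embc]
    have hsign : ((sign (Φ hp hS τ ρ) : ℤ) : R)
        = (-1 : R) ^ ((∑ j ∈ S, (j.val + 1)) + p * (p + 1) / 2) *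
          (((sign τ : ℤ) : R) * ((sign ρ : ℤ) : R)) := by
      rw [sign_Φ]
      push_cast
      rw [sign_πE_cast hp hS]
    rw [hprod, hsign]
    simp only [Matrix.submatrix_apply]
    ring
  have hbij : Function.Bijective
      (fun x : {S : Finset (Fin n) // S.card = p} × Perm (Fin p) × Perm (Fin (n - p)) =>
        Φ hp x.1.2 x.2.1 x.2.2) := by
    rw [Fintype.bijective_iff_injective_and_card]
    constructor
    · rintro ⟨⟨S₁, hS₁⟩, τ₁, ρ₁⟩ ⟨⟨S₂, hS₂⟩, τ₂, ρ₂⟩ h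
      simp only at h
      have hSS : S₁ = S₂ := by
        ext j
        rw [mem_iff_lt hp hS₁ τ₁ ρ₁ j, mem_iff_lt hp hS₂ τ₂ ρ₂ j, h]
      subst hSS
      have hs : hS₁ = hS₂ := Subsingleton.elim _ _
      subst hs
      have hττ : τ₁ = τ₂ := by
        ext i
        have h2 := congrArg (fun σ : Perm (Fin n) => σ (S₁.orderEmbOfFin hS₁ i)) h
        simp only [Φ_emb] at h2
        exact congrArg Fin.val (Fin.castLE_injective hp h2)
      have hρρ : ρ₁ = ρ₂ := by
        ext k
        have h2 := congrArg
          (fun σ : Perm (Fin n) => σ (S₁ᶜ.orderEmbOfFin (card_compl_eq hp hS₁) k)) h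
        simp only [Φ_embc] at h2
        have := congrArg Fin.val h2
        simp only at this
        omega
      rw [hττ, hρρ]
    · simp only [Fintype.card_prod, Fintype.card_perm, Fintype.card_finset_len,
        Fintype.card_fin]
      rw [← Nat.choose_mul_factorial_mul_factorial hp, mul_assoc]
  rw [Matrix.det_apply']
  symm
  calc ∑ S : {S : Finset (Fin n) // S.card = p},
      (-1 : R) ^ ((∑ j ∈ S.1, (j.val + 1)) + p * (p + 1) / 2) *
        (a.submatrix (fun i : Fin p => Fin.castLE hp i)
          (S.1.orderEmbOfFin S.2)).det *
        (a.submatrix (fun i : Fin (n - p) => (⟨p + i.val, by omega⟩ : Fin n))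
          ((S.1ᶜ).orderEmbOfFin (by
            rw [Finset.card_compl, S.2]; simp))).det
      = ∑ S : {S : Finset (Fin n) // S.card = p}, ∑ τ : Perm (Fin p),
          ∑ ρ : Perm (Fin (n - p)),
          ((sign (Φ hp S.2 τ ρ) : ℤ) : R) * ∏ j, a (Φ hp S.2 τ ρ j) j :=
        Finset.sum_congr rfl fun S _ => hterm S.1 S.2
    _ = ∑ x : {S : Finset (Fin n) // S.card = p} × Perm (Fin p) × Perm (Fin (n - p)),
          ((sign (Φ hp x.1.2 x.2.1 x.2.2) : ℤ) : R) * ∏ j, a (Φ hp x.1.2 x.2.1 x.2.2 j) j := by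
        rw [Fintype.sum_prod_type]
        exact Finset.sum_congr rfl fun S _ => by rw [Fintype.sum_prod_type]
    _ = ∑ σ : Perm (Fin n), ((sign σ : ℤ) : R) * ∏ j, a (σ j) j :=
        Fintype.sum_bijective _ hbij _ _ fun x => rfl
end

section
/- For an invertible n×n matrix a over a field, the second compound matrix m₂(a) satisfies det(m₂(a)) = (det a)^(n−1). -/
open Matrix

/-- The second compound matrix of an n×n matrix: the N×N matrix, N = n(n−1)/2,
indexed by 2-element subsets of {1,…,n}, whose ({i,j},{k,l}) entry is the 2×2
minor of `a` on rows i,j and columns k,l. -/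
noncomputable def compound2 (n : ℕ) {K : Type*} [Field K]
    (a : Matrix (Fin n) (Fin n) K) :
    Matrix {S : Finset (Fin n) // S.card = 2} {S : Finset (Fin n) // S.card = 2} K :=
  fun S T => (a.submatrix (S.1.orderEmbOfFin S.2) (T.1.orderEmbOfFin T.2)).det

namespace Compound2Aux

variable {n : ℕ} {K : Type*} [Field K]

/-- the `i`-th element of a 2-subset, in increasing order -/
noncomputable def e2 (S : {S : Finset (Fin n) // S.card = 2}) (i : Fin 2) : Fin n :=
  S.1.orderEmbOfFin S.2 i

lemma e2_lt (S : {S : Finset (Fin n) // S.card = 2}) : e2 S 0 < e2 S 1 :=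
  (S.1.orderEmbOfFin S.2).strictMono (by decide)

lemma e2_mem (S : {S : Finset (Fin n) // S.card = 2}) (i : Fin 2) : e2 S i ∈ S.1 :=
  Finset.orderEmbOfFin_mem _ _ _

lemma eq_pair (S : {S : Finset (Fin n) // S.card = 2}) : S.1 = {e2 S 0, e2 S 1} := by
  refine (Finset.eq_of_subset_of_card_le ?_ ?_).symm
  · intro x hx
    simp only [Finset.mem_insert, Finset.mem_singleton] at hx
    rcases hx with h | h <;> exact h ▸ e2_mem S _
  · rw [S.2, Finset.card_pair (e2_lt S).ne]

lemma e2_pair {k l : Fin n} (h : k < l) :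
    e2 ⟨{k, l}, Finset.card_pair h.ne⟩ 0 = k ∧ e2 ⟨{k, l}, Finset.card_pair h.ne⟩ 1 = l := by
  have hu := Finset.orderEmbOfFin_unique (s := ({k, l} : Finset (Fin n)))
      (Finset.card_pair h.ne) (f := ![k, l]) ?_ ?_
  · constructor
    · have := congrFun hu 0; simpa [e2] using this.symm
    · have := congrFun hu 1; simpa [e2] using this.symm
  · intro x; fin_cases x <;> simp
  · intro a b hab
    fin_cases a <;> fin_cases b <;> simp_all

lemma compound2_apply (a : Matrix (Fin n) (Fin n) K)
    (S T : {S : Finset (Fin n) // S.card = 2}) :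
    compound2 n a S T =
      a (e2 S 0) (e2 T 0) * a (e2 S 1) (e2 T 1) - a (e2 S 0) (e2 T 1) * a (e2 S 1) (e2 T 0) := by
  simp [compound2, Matrix.det_fin_two, e2]

lemma subtype_eq {S T : {S : Finset (Fin n) // S.card = 2}}
    (h0 : e2 S 0 = e2 T 0) (h1 : e2 S 1 = e2 T 1) : S = T :=
  Subtype.ext (by rw [eq_pair S, eq_pair T, h0, h1])

/-- sum over 2-subsets equals sum over ordered pairs -/
lemma sum_sub2 (F : Fin n → Fin n → K) :
    ∑ S : {S : Finset (Fin n) // S.card = 2}, (F (e2 S 0) (e2 S 1) + F (e2 S 1) (e2 S 0)) =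
      ∑ p ∈ Finset.univ.filter (fun p : Fin n × Fin n => p.1 < p.2), (F p.1 p.2 + F p.2 p.1) := by
  refine Finset.sum_bij (fun S _ => (e2 S 0, e2 S 1)) ?_ ?_ ?_ ?_
  · intro S _
    simp [e2_lt S]
  · intro S₁ _ S₂ _ h
    rw [Prod.mk.injEq] at h
    exact subtype_eq h.1 h.2
  · intro p hp
    simp only [Finset.mem_filter, Finset.mem_univ, true_and] at hp
    refine ⟨⟨{p.1, p.2}, Finset.card_pair hp.ne⟩, Finset.mem_univ _, ?_⟩
    show (e2 ⟨{p.1, p.2}, Finset.card_pair hp.ne⟩ 0, e2 ⟨{p.1, p.2}, Finset.card_pair hp.ne⟩ 1) = p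
    rw [(e2_pair hp).1, (e2_pair hp).2]
  · intro S _; rfl

lemma sum_offdiag (F : Fin n → Fin n → K) (hF : ∀ k, F k k = 0) :
    ∑ p ∈ Finset.univ.filter (fun p : Fin n × Fin n => p.1 < p.2), (F p.1 p.2 + F p.2 p.1) =
      ∑ k, ∑ l, F k l := by
  have h1 : ∑ k, ∑ l, F k l = ∑ p ∈ (Finset.univ : Finset (Fin n × Fin n)), F p.1 p.2 := by
    rw [← Finset.univ_product_univ, Finset.sum_product]
  rw [h1, ← Finset.sum_filter_add_sum_filter_not Finset.univ
    (fun p : Fin n × Fin n => p.1 < p.2) (fun p => F p.1 p.2), Finset.sum_add_distrib]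
  congr 1
  have h2 : ∑ p ∈ Finset.univ.filter (fun p : Fin n × Fin n => ¬ p.1 < p.2), F p.1 p.2 =
      ∑ p ∈ Finset.univ.filter (fun p : Fin n × Fin n => p.2 < p.1), F p.1 p.2 := by
    refine (Finset.sum_subset ?_ ?_).symm
    · intro p hp
      simp only [Finset.mem_filter, Finset.mem_univ, true_and] at hp ⊢
      exact not_lt_of_gt hp
    · intro p hp hnp
      simp only [Finset.mem_filter, Finset.mem_univ, true_and] at hp hnp
      have : p.1 = p.2 := le_antisymm (not_lt.1 hnp) (not_lt.1 hp)
      rw [this]; exact hF _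
  rw [h2]
  refine Finset.sum_equiv (Equiv.prodComm _ _) ?_ ?_
  · intro p; simp
  · intro p _; rfl

lemma compound2_mul (A B : Matrix (Fin n) (Fin n) K) :
    compound2 n (A * B) = compound2 n A * compound2 n B := by
  ext S T
  set F : Fin n → Fin n → K := fun k l => A (e2 S 0) k * A (e2 S 1) l *
      (B k (e2 T 0) * B l (e2 T 1) - B k (e2 T 1) * B l (e2 T 0)) with hFdef
  have hF : ∀ k, F k k = 0 := fun k => by simp only [hFdef]; ring
  rw [Matrix.mul_apply]
  calc compound2 n (A * B) S T
      = ∑ k, ∑ l, F k l := by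
        rw [compound2_apply]
        simp only [Matrix.mul_apply]
        rw [Finset.sum_mul_sum, Finset.sum_mul_sum, ← Finset.sum_sub_distrib]
        refine Finset.sum_congr rfl fun k _ => ?_
        rw [← Finset.sum_sub_distrib]
        refine Finset.sum_congr rfl fun l _ => ?_
        simp only [hFdef]; ring
    _ = ∑ p ∈ Finset.univ.filter (fun p : Fin n × Fin n => p.1 < p.2),
          (F p.1 p.2 + F p.2 p.1) := (sum_offdiag _ hF).symm
    _ = ∑ U : {S : Finset (Fin n) // S.card = 2}, (F (e2 U 0) (e2 U 1) + F (e2 U 1) (e2 U 0)) :=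
        (sum_sub2 _).symm
    _ = ∑ U, compound2 n A S U * compound2 n B U T := by
        refine Finset.sum_congr rfl fun U _ => ?_
        rw [compound2_apply, compound2_apply]
        simp only [hFdef]; ring

lemma compound2_diagonal (d : Fin n → K) :
    compound2 n (Matrix.diagonal d) =
      Matrix.diagonal (fun S : {S : Finset (Fin n) // S.card = 2} => ∏ i ∈ S.1, d i) := by
  ext S T
  rw [compound2_apply]
  by_cases hST : S = T
  · subst hST
    have hgoal : (∏ i ∈ S.1, d i) = d (e2 S 0) * d (e2 S 1) := by
      rw [eq_pair S, Finset.prod_pair (e2_lt S).ne]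
    rw [Matrix.diagonal_apply_eq (fun S : {S : Finset (Fin n) // S.card = 2} => ∏ i ∈ S.1, d i) S,
      hgoal]
    simp [Matrix.diagonal_apply, (e2_lt S).ne, (e2_lt S).ne']
  · rw [Matrix.diagonal_apply_ne _ hST]
    have h1 : ¬(e2 S 0 = e2 T 0 ∧ e2 S 1 = e2 T 1) := fun ⟨h0, h1⟩ => hST (subtype_eq h0 h1)
    have hS := e2_lt S
    have hT := e2_lt T
    simp only [Matrix.diagonal_apply]
    split_ifs <;> simp_all <;> omega


lemma det_eq_one_of_triangular {ι : Type*} [Fintype ι] [DecidableEq ι] (M : Matrix ι ι K)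
    (w : ι → ℕ) (h1 : ∀ i, M i i = 1) (h2 : ∀ i j, i ≠ j → M i j ≠ 0 → w i < w j) :
    M.det = 1 := by
  have hb : M.BlockTriangular w := by
    intro i j hij
    by_contra h
    rcases eq_or_ne i j with rfl | hne
    · exact absurd hij (lt_irrefl _)
    · exact absurd (h2 i j hne h) (not_lt.2 hij.le)
  rw [hb.det]
  refine Finset.prod_eq_one fun k _ => ?_
  have hblock : M.toSquareBlock w k = 1 := by
    ext x y
    rcases eq_or_ne x y with rfl | hxy
    · simp [Matrix.toSquareBlock_def, Matrix.one_apply, h1]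
    · have hxy' : (x : ι) ≠ (y : ι) := fun h => hxy (Subtype.ext h)
      have : M (x : ι) (y : ι) = 0 := by
        by_contra h
        have := h2 _ _ hxy' h
        rw [x.2, y.2] at this
        exact absurd this (lt_irrefl _)
      simp [Matrix.toSquareBlock_def, Matrix.one_apply, this, hxy]
  rw [hblock, Matrix.det_one]

lemma card_mem_sub2 (hn : 2 ≤ n) (i : Fin n) :
    (Finset.univ.filter (fun S : {S : Finset (Fin n) // S.card = 2} => i ∈ S.1)).card = n - 1 := by
  have h1 : (Finset.univ.erase i).card = n - 1 := by
    simp [Finset.card_erase_of_mem]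
  rw [← h1]
  refine Eq.symm (Finset.card_bij (fun k hk => (⟨({i, k} : Finset (Fin n)),
    Finset.card_pair (fun h => (Finset.mem_erase.1 hk).1 h.symm)⟩ :
      {S : Finset (Fin n) // S.card = 2})) ?_ ?_ ?_)
  · intro k hk
    simp
  · intro k₁ hk₁ k₂ hk₂ h
    have h' : ({i, k₁} : Finset (Fin n)) = {i, k₂} := congrArg Subtype.val h
    have : k₁ ∈ ({i, k₂} : Finset (Fin n)) := by
      rw [← h']; simp
    simp only [Finset.mem_insert, Finset.mem_singleton] at this
    rcases this with h | h
    · exact absurd h (Finset.mem_erase.1 hk₁).1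
    · exact h
  · intro S hS
    simp only [Finset.mem_filter, Finset.mem_univ, true_and] at hS
    obtain ⟨a, b, hab, hSab⟩ := Finset.card_eq_two.1 S.2
    have hi : i = a ∨ i = b := by
      have := hS; rw [hSab] at this
      simpa using this
    rcases hi with rfl | rfl
    · refine ⟨b, Finset.mem_erase.2 ⟨fun h => hab h.symm, Finset.mem_univ _⟩, ?_⟩
      exact (Subtype.ext (by rw [hSab])).symm
    · refine ⟨a, Finset.mem_erase.2 ⟨hab, Finset.mem_univ _⟩, ?_⟩
      refine (Subtype.ext (by rw [hSab, Finset.pair_comm])).symm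

lemma prod_sub2 (hn : 2 ≤ n) (d : Fin n → K) :
    (∏ S : {S : Finset (Fin n) // S.card = 2}, ∏ i ∈ S.1, d i) = (∏ i, d i) ^ (n - 1) := by
  have h1 : ∀ S : {S : Finset (Fin n) // S.card = 2},
      (∏ i ∈ S.1, d i) = ∏ i : Fin n, if i ∈ S.1 then d i else 1 := by
    intro S
    rw [Finset.prod_ite_mem, Finset.univ_inter]
  simp only [h1]
  rw [Finset.prod_comm]
  have h2 : ∀ y : Fin n,
      (∏ x : {S : Finset (Fin n) // S.card = 2}, if y ∈ x.1 then d y else 1) = d y ^ (n - 1) := by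
    intro y
    rw [Finset.prod_ite, Finset.prod_const, Finset.prod_const_one, mul_one, card_mem_sub2 hn]
  simp only [h2]
  rw [Finset.prod_pow]

lemma compound2_transvection_diag {i j : Fin n} (hij : i ≠ j) (c : K)
    (S : {S : Finset (Fin n) // S.card = 2}) :
    compound2 n (Matrix.transvection i j c) S S = 1 := by
  have h01 : e2 S 0 ≠ e2 S 1 := (e2_lt S).ne
  rw [compound2_apply]
  simp only [Matrix.transvection, Matrix.add_apply, Matrix.one_apply, Matrix.single,
    Matrix.of_apply]
  split_ifs <;> simp_all <;> ring

lemma compound2_transvection_ne_zero {i j : Fin n} (hij : i ≠ j) (c : K)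
    {S T : {S : Finset (Fin n) // S.card = 2}} (hST : S ≠ T)
    (h : compound2 n (Matrix.transvection i j c) S T ≠ 0) :
    j ∉ S.1 ∧ j ∈ T.1 := by
  have hS := e2_lt S
  have hT := e2_lt T
  have hmain : ¬(e2 S 0 = e2 T 0 ∧ e2 S 1 = e2 T 1) := fun ⟨h0, h1⟩ => hST (subtype_eq h0 h1)
  rw [compound2_apply] at h
  simp only [Matrix.transvection, Matrix.add_apply, Matrix.one_apply, Matrix.single,
    Matrix.of_apply] at h
  rw [eq_pair S, eq_pair T]
  simp only [Finset.mem_insert, Finset.mem_singleton]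
  split_ifs at h <;> simp_all <;> omega

lemma compound2_transvection_det {i j : Fin n} (hij : i ≠ j) (c : K) :
    (compound2 n (Matrix.transvection i j c)).det = 1 := by
  refine det_eq_one_of_triangular _ (fun S => if j ∈ S.1 then 1 else 0) ?_ ?_
  · exact compound2_transvection_diag hij c
  · intro S T hne h
    obtain ⟨h1, h2⟩ := compound2_transvection_ne_zero hij c hne h
    simp [h1, h2]

end Compound2Aux

/-- For an invertible n×n matrix (n ≥ 2), det(m₂(a)) = (det a)^{n−1}. -/
theorem det_compound2 {n : ℕ} (hn : 2 ≤ n) {K : Type*} [Field K]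
    (a : Matrix (Fin n) (Fin n) K) (ha : IsUnit a.det) :
    (compound2 n a).det = a.det ^ (n - 1) := by
  have hdet : a.det ≠ 0 := ha.ne_zero
  refine Matrix.diagonal_transvection_induction_of_det_ne_zero
    (fun M => (compound2 n M).det = M.det ^ (n - 1)) a hdet ?_ ?_ ?_
  · intro D hD
    rw [Compound2Aux.compound2_diagonal, Matrix.det_diagonal, Matrix.det_diagonal,
      Compound2Aux.prod_sub2 hn]
  · rintro ⟨ti, tj, hij, c⟩
    rw [Matrix.TransvectionStruct.toMatrix_mk,
      Compound2Aux.compound2_transvection_det hij, Matrix.det_transvection_of_ne _ _ hij, one_pow]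
  · intro A B hA hB h1 h2
    rw [Compound2Aux.compound2_mul, Matrix.det_mul, h1, h2, Matrix.det_mul, mul_pow]
end
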